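/- Let q > 0, L₀ > 0, Tₘ₀ > 0, let γ > 0 satisfy q − L₀·γ = √π·(Tₘ₀/2 + L₀·γ²)·e^{γ²}·erf(γ), and set A = (q − L₀γ)/(√π·erf γ), T(y,t) = A·(2√t·e^{−y²/(4t)} + √π·y·erf(y/(2√t))) − q·y and S(t) = 2γ√t. Then the Stefan condition −∂T/∂y (S(t),t) = L₀√t · S'(t) holds for every t > 0; equivalently, ∂T/∂y (2γ√t, t) = −L₀·γ for every t > 0. -/

import Mathlib

noncomputable def erf (x : ℝ) : ℝ :=
  (2 / Real.sqrt Real.pi) * ∫ s in (0:ℝ)..x, Real.exp (-s ^ 2)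

lemma hasDerivAt_erf (x : ℝ) :
    HasDerivAt erf (2 / Real.sqrt Real.pi * Real.exp (-x ^ 2)) x := by
  have hc : Continuous fun s : ℝ => Real.exp (-s ^ 2) := by continuity
  have h : HasDerivAt (fun u : ℝ => ∫ s in (0:ℝ)..u, Real.exp (-s ^ 2))
      (Real.exp (-x ^ 2)) x :=
    intervalIntegral.integral_hasDerivAt_right (hc.intervalIntegrable _ _)
      (hc.stronglyMeasurableAtFilter _ _) hc.continuousAt
  exact h.const_mul (2 / Real.sqrt Real.pi)

lemma erf_pos {x : ℝ} (hx : 0 < x) : 0 < erf x := by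
  have hc : Continuous fun s : ℝ => Real.exp (-s ^ 2) := by continuity
  have hi : 0 < ∫ s in (0:ℝ)..x, Real.exp (-s ^ 2) :=
    intervalIntegral.intervalIntegral_pos_of_pos_on (hc.intervalIntegrable _ _)
      (fun s _ => Real.exp_pos _) hx
  have h2 : 0 < 2 / Real.sqrt Real.pi :=
    div_pos two_pos (Real.sqrt_pos.2 Real.pi_pos)
  exact mul_pos h2 hi

/-- With `A = (q − L₀γ)/(√π erf γ)`,
`T(y,t) = A(2√t e^{−y²/(4t)} + √π y erf(y/(2√t))) − q y` and `S(t) = 2γ√t`,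
the Stefan condition `−∂T/∂y (S(t),t) = L₀√t · S'(t)` holds for every `t > 0`;
equivalently `∂T/∂y (2γ√t, t) = −L₀γ` for every `t > 0`. -/
theorem stmt8 (q L₀ Tm₀ γ A : ℝ) (hq : 0 < q) (hL : 0 < L₀) (hTm : 0 < Tm₀)
    (hγ : 0 < γ)
    (hγeq : q - L₀ * γ =
      Real.sqrt Real.pi * (Tm₀ / 2 + L₀ * γ ^ 2) * Real.exp (γ ^ 2) * erf γ)
    (hA : A = (q - L₀ * γ) / (Real.sqrt Real.pi * erf γ))
    (T : ℝ → ℝ → ℝ)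
    (hT : ∀ y t : ℝ, T y t =
      A * (2 * Real.sqrt t * Real.exp (-y ^ 2 / (4 * t))
            + Real.sqrt Real.pi * y * erf (y / (2 * Real.sqrt t))) - q * y)
    (S : ℝ → ℝ) (hS : ∀ t : ℝ, S t = 2 * γ * Real.sqrt t) :
    ∀ t : ℝ, 0 < t →
      (-deriv (fun y : ℝ => T y t) (S t) = L₀ * Real.sqrt t * deriv S t ∧
        deriv (fun y : ℝ => T y t) (2 * γ * Real.sqrt t) = -(L₀ * γ)) := by
  intro t ht
  have hst : 0 < Real.sqrt t := Real.sqrt_pos.2 ht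
  have hπ : 0 < Real.sqrt Real.pi := Real.sqrt_pos.2 Real.pi_pos
  have hsq : Real.sqrt t ^ 2 = t := Real.sq_sqrt ht.le
  -- derivative of T in y at any point y
  have key : ∀ y : ℝ, HasDerivAt (fun y : ℝ => T y t)
      (A * Real.sqrt Real.pi * erf (y / (2 * Real.sqrt t)) - q) y := by
    intro y
    have h1 : HasDerivAt (fun y : ℝ => -y ^ 2 / (4 * t)) (-(2 * y) / (4 * t)) y := by
      simpa using ((hasDerivAt_pow 2 y).neg.div_const (4 * t))
    have h2 := h1.exp
    have h3 := h2.const_mul (2 * Real.sqrt t)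
    have hu : HasDerivAt (fun y : ℝ => y / (2 * Real.sqrt t)) (1 / (2 * Real.sqrt t)) y := by
      simpa using (hasDerivAt_id y).div_const (2 * Real.sqrt t)
    have h4 : HasDerivAt (fun y : ℝ => erf (y / (2 * Real.sqrt t)))
        (2 / Real.sqrt Real.pi * Real.exp (-(y / (2 * Real.sqrt t)) ^ 2)
          * (1 / (2 * Real.sqrt t))) y :=
      by have := (hasDerivAt_erf (y / (2 * Real.sqrt t))).comp y hu; exact this
    have h5 := ((hasDerivAt_id y).mul h4).const_mul (Real.sqrt Real.pi)
    have h6 := ((h3.add h5).const_mul A).sub ((hasDerivAt_id y).const_mul q)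
    have hexp : (-(y / (2 * Real.sqrt t)) ^ 2) = -y ^ 2 / (4 * t) := by
      rw [div_pow, mul_pow, hsq]; ring_nf
    convert h6 using 1
    · rfl
    · rfl
    · funext z; rw [hT]; simp only [id_eq, Pi.add_apply, Pi.mul_apply, Pi.sub_apply]; ring
    · rw [hexp, id_eq]
      field_simp
      ring_nf
      rw [hsq]
      ring
  constructor
  · -- Stefan condition
    have hd := (key (S t)).deriv
    have hSd : HasDerivAt S (γ / Real.sqrt t) t := by
      have h0 : HasDerivAt (fun u : ℝ => 2 * γ * Real.sqrt u)
          (2 * γ * (1 / (2 * Real.sqrt t))) t :=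
        (Real.hasDerivAt_sqrt ht.ne').const_mul (2 * γ)
      have hSe : S = fun u => 2 * γ * Real.sqrt u := funext hS
      rw [hSe]
      convert h0 using 1
      field_simp
    rw [hd, hSd.deriv, hS]
    have harg : 2 * γ * Real.sqrt t / (2 * Real.sqrt t) = γ := by
      field_simp
    rw [harg, hA]
    have hne : Real.sqrt Real.pi * erf γ ≠ 0 :=
      (mul_pos hπ (erf_pos hγ)).ne'
    field_simp
    rw [mul_div_cancel_right₀ _ (erf_pos hγ).ne']
    ring
  · have hd := (key (2 * γ * Real.sqrt t)).deriv
    rw [hd]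
    have harg : 2 * γ * Real.sqrt t / (2 * Real.sqrt t) = γ := by
      field_simp
    rw [harg, hA]
    have hne : Real.sqrt Real.pi * erf γ ≠ 0 :=
      (mul_pos hπ (erf_pos hγ)).ne'
    field_simp
    rw [mul_div_cancel_right₀ _ (erf_pos hγ).ne']
    ring
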